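/- Let Γ be the cycle graph on n vertices and let 1 ≤ k ≤ n−1. Then for any defect set V_k of size k, the defect k group G_{k,V_k} of Γ is isomorphic to the cyclic group Z_{n−k} of order n−k. -/

import Mathlib

variable {V : Type*}

/-- The elementary collapsing `e_{uv}`: sends `u` to `v` and fixes every other vertex. -/
def collapse [DecidableEq V] (u v : V) : Function.End V :=
  fun x => if x = u then v else x

/-- The flow semigroup of a digraph with edge relation `E`. -/
def flowSemigroup [DecidableEq V] (E : V → V → Prop) : Subsemigroup (Function.End V) :=
  Subsemigroup.closure {f | ∃ u v, E u v ∧ f = collapse u v}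

/-- The defect group `G_{k,K}` of the digraph `E` with defect set `K`. -/
def defectGroup [DecidableEq V] (E : V → V → Prop) (K : Set V) :
    Subgroup (Equiv.Perm {x : V // x ∉ K}) :=
  Subgroup.closure {p | ∃ s ∈ flowSemigroup E,
    (∀ x ∈ K, s x ∉ K) ∧ ∀ (x : V) (h : x ∉ K), s x = ↑(p ⟨x, h⟩)}

open Fin.NatCast

def cyc (a b c : ℕ) : Prop := (a ≤ b ∧ b ≤ c) ∨ (b ≤ c ∧ c ≤ a) ∨ (c ≤ a ∧ a ≤ b)

lemma fin_add_one_val {m : ℕ} (a : Fin (m + 1)) :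
    ((a + 1).val = a.val + 1 ∧ a.val + 1 < m + 1) ∨ ((a + 1).val = 0 ∧ a.val + 1 = m + 1) := by
  rcases eq_or_ne a (Fin.last m) with h | h
  · right
    rw [Fin.val_add_one, if_pos h, h]
    simp [Fin.last]
  · left
    rw [Fin.val_add_one, if_neg h]
    have := a.isLt
    have hv : a.val ≠ m := fun hv => h (Fin.ext hv)
    omega

lemma rot_pow_apply {m : ℕ} (t : ℕ) (x : Fin (m + 1)) :
    (finRotate (m + 1) ^ t) x = x + (t : Fin (m + 1)) := by
  induction t with
  | zero => simp
  | succ t ih =>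
    rw [pow_succ', Equiv.Perm.mul_apply, ih, finRotate_succ_apply]
    push_cast
    rw [add_assoc]

lemma perm_cyc_rot {m : ℕ} (q : Equiv.Perm (Fin m))
    (hq : ∀ a b c : Fin m, cyc a.val b.val c.val → cyc (q a).val (q b).val (q c).val) :
    q ∈ Subgroup.zpowers (finRotate m) := by
  rcases m with _ | m'
  · have : q = 1 := by ext x; exact x.elim0
    rw [this]; exact Subgroup.one_mem _
  have step : ∀ x : Fin (m' + 1), q (x + 1) = q x + 1 := by
    intro x
    rcases Nat.eq_zero_or_pos m' with h0 | h0
    · subst h0; exact @Subsingleton.elim (Fin 1) Fin.subsingleton_one _ _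
    by_contra hne
    set z := q.symm (q x + 1) with hz
    have hqz : q z = q x + 1 := q.apply_symm_apply _
    have hqx1 : q x + 1 ≠ q x := by
      rcases fin_add_one_val (q x) with ⟨h1, h2⟩ | ⟨h1, h2⟩ <;>
        (intro hc; have := congrArg Fin.val hc; omega)
    have hx1 : x + 1 ≠ x := by
      rcases fin_add_one_val x with ⟨h1, h2⟩ | ⟨h1, h2⟩ <;>
        (intro hc; have := congrArg Fin.val hc; omega)
    have hz1 : z ≠ x := by
      intro hc; apply hqx1; rw [← hqz, hc]
    have hz2 : z ≠ x + 1 := by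
      intro hc; apply hne; rw [← hqz, hc]
    have hcyc : cyc x.val (x + 1).val z.val := by
      have hzval : z.val ≠ x.val := fun h => hz1 (Fin.ext h)
      have hzval2 : z.val ≠ (x + 1).val := fun h => hz2 (Fin.ext h)
      have := z.isLt
      rcases fin_add_one_val x with ⟨h1, h2⟩ | ⟨h1, h2⟩ <;>
        (unfold cyc; omega)
    have hmain := hq _ _ _ hcyc
    rw [hqz] at hmain
    have hBA : q (x + 1) ≠ q x := fun h => hx1 (q.injective h)
    have hBA' : (q (x + 1)).val ≠ (q x).val := fun h => hBA (Fin.ext h)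
    have hBB : (q (x + 1)).val ≠ (q x + 1).val := fun h => hne (Fin.ext h)
    have h3 := (q (x + 1)).isLt
    rcases fin_add_one_val (q x) with ⟨h1, h2⟩ | ⟨h1, h2⟩ <;>
      (unfold cyc at hmain; omega)
  have main : ∀ j (hj : j < m' + 1), q ⟨j, hj⟩ = ⟨j, hj⟩ + q 0 := by
    intro j
    induction j with
    | zero =>
      intro hj
      have h0 : (⟨0, hj⟩ : Fin (m' + 1)) = 0 := rfl
      rw [h0, zero_add]
    | succ j ih =>
      intro hj
      have hj' : j < m' + 1 := Nat.lt_of_succ_lt hj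
      have hstep : (⟨j + 1, hj⟩ : Fin (m' + 1)) = ⟨j, hj'⟩ + 1 := by
        apply Fin.ext
        rcases fin_add_one_val (⟨j, hj'⟩ : Fin (m' + 1)) with ⟨h1, h2⟩ | ⟨h1, h2⟩ <;>
          simp only [Fin.val_mk] at h1 h2 ⊢ <;> omega
      rw [hstep, step, ih hj', add_right_comm]
  have hqrot : q = finRotate (m' + 1) ^ (q 0).val := by
    ext x
    rw [rot_pow_apply, Fin.cast_val_eq_self]
    have := main x.val x.isLt
    rw [Fin.eta] at this
    rw [this]
  rw [hqrot]
  exact ⟨((q 0).val : ℤ), by simp⟩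

lemma collapse_cyc {n : ℕ} (u v a b c : Fin (n + 2)) (huv : u = v + 1 ∨ v = u + 1)
    (h : cyc a.val b.val c.val) :
    cyc (collapse u v a).val (collapse u v b).val (collapse u v c).val := by
  have ha := a.isLt; have hb := b.isLt; have hc := c.isLt
  have hu := u.isLt; have hv2 := v.isLt
  have key : (u.val = v.val + 1 ∧ v.val + 1 < n + 2) ∨ (u.val = 0 ∧ v.val + 1 = n + 2) ∨
      (v.val = u.val + 1 ∧ u.val + 1 < n + 2) ∨ (v.val = 0 ∧ u.val + 1 = n + 2) := by
    rcases huv with h' | h'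
    · rcases fin_add_one_val (m := n + 1) v with ⟨e1, e2⟩ | ⟨e1, e2⟩
      · left; constructor
        · rw [h', e1]
        · exact e2
      · right; left; constructor
        · rw [h', e1]
        · exact e2
    · rcases fin_add_one_val (m := n + 1) u with ⟨e1, e2⟩ | ⟨e1, e2⟩
      · right; right; left; exact ⟨by rw [h', e1], e2⟩
      · right; right; right; exact ⟨by rw [h', e1], e2⟩
  unfold cyc at h ⊢
  simp only [collapse, apply_ite Fin.val, Fin.ext_iff]
  split_ifs <;> omega

lemma flow_cyc {n : ℕ} {s : Function.End (Fin (n + 2))}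
    (hs : s ∈ flowSemigroup (SimpleGraph.cycleGraph (n + 2)).Adj) :
    ∀ a b c : Fin (n + 2), cyc a.val b.val c.val → cyc (s a).val (s b).val (s c).val := by
  induction hs using Subsemigroup.closure_induction with
  | mem f hf =>
    obtain ⟨u, v, huv, rfl⟩ := hf
    rw [SimpleGraph.cycleGraph_adj] at huv
    intro a b c h
    apply collapse_cyc
    · rcases huv with h' | h'
      · left; rw [← h']; abel
      · right; rw [← h']; abel
    · exact h
  | mul f g hf hg ihf ihg =>
    intro a b c h
    exact ihf _ _ _ (ihg _ _ _ h)

lemma mod_eq_sub' {a M : ℕ} (h1 : M ≤ a) (h2 : a < 2 * M) : a % M = a - M := by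
  rw [Nat.mod_eq_sub_mod h1, Nat.mod_eq_of_lt (by omega)]

lemma cast_inj_lt {n : ℕ} {j j' : ℕ} (hj : j < n + 2) (hj' : j' < n + 2) :
    (j : Fin (n + 2)) = (j' : Fin (n + 2)) ↔ j = j' := by
  rw [Fin.ext_iff, Fin.val_natCast, Fin.val_natCast, Nat.mod_eq_of_lt hj, Nat.mod_eq_of_lt hj']

lemma fin_val_add_cast {n : ℕ} (x : Fin (n + 2)) (c : ℕ) :
    (x + (c : Fin (n + 2))).val = (x.val + c) % (n + 2) := by
  conv_rhs => rw [Nat.add_mod]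
  rw [Fin.val_add, Fin.val_natCast, Nat.mod_eq_of_lt x.isLt]

lemma cast_succ_add {n : ℕ} (x : Fin (n + 2)) (j : ℕ) :
    x + ((j + 1 : ℕ) : Fin (n + 2)) = (x + (j : Fin (n + 2))) + 1 := by
  push_cast
  rw [add_assoc]

lemma exists_nonK {n : ℕ} {K : Set (Fin (n + 2))} (hC : ∃ c, c ∉ K) (x : Fin (n + 2)) :
    ∃ j : ℕ, x + (j : Fin (n + 2)) ∉ K := by
  obtain ⟨c, hc⟩ := hC
  refine ⟨(c - x).val, ?_⟩
  have h : x + (((c - x).val : ℕ) : Fin (n + 2)) = c := by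
    rw [Fin.cast_val_eq_self]; abel
  rwa [h]

open Classical in
noncomputable def dK {n : ℕ} (K : Set (Fin (n + 2))) (hC : ∃ c, c ∉ K) (x : Fin (n + 2)) : ℕ :=
  Nat.find (exists_nonK hC x)

lemma dK_spec {n : ℕ} (K : Set (Fin (n + 2))) (hC : ∃ c, c ∉ K) (x : Fin (n + 2)) :
    x + ((dK K hC x : ℕ) : Fin (n + 2)) ∉ K := by
  classical
  unfold dK
  exact Nat.find_spec (exists_nonK hC x)

lemma dK_min {n : ℕ} (K : Set (Fin (n + 2))) (hC : ∃ c, c ∉ K) (x : Fin (n + 2))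
    {j : ℕ} (hj : j < dK K hC x) : x + (j : Fin (n + 2)) ∈ K := by
  classical
  unfold dK at hj
  exact not_not.mp (Nat.find_min (exists_nonK hC x) hj)

lemma dK_eq {n : ℕ} (K : Set (Fin (n + 2))) (hC : ∃ c, c ∉ K) (x : Fin (n + 2)) (y : ℕ)
    (h1 : x + (y : Fin (n + 2)) ∉ K) (h2 : ∀ j < y, x + (j : Fin (n + 2)) ∈ K) :
    dK K hC x = y := by
  classical
  unfold dK
  exact (Nat.find_eq_iff _).mpr ⟨h1, fun j hj => not_not_intro (h2 j hj)⟩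

noncomputable def pushF {n : ℕ} (K : Set (Fin (n + 2))) (hC : ∃ c, c ∉ K) :
    Function.End (Fin (n + 2)) :=
  fun x => x + ((dK K hC x : ℕ) : Fin (n + 2))

lemma pushF_not_mem {n : ℕ} (K : Set (Fin (n + 2))) (hC : ∃ c, c ∉ K) (x : Fin (n + 2)) :
    pushF K hC x ∉ K := dK_spec K hC x

lemma collapse_succ_mem {n : ℕ} (a : Fin (n + 2)) :
    collapse a (a + 1) ∈
      {f | ∃ u v, (SimpleGraph.cycleGraph (n + 2)).Adj u v ∧ f = collapse u v} := by
  refine ⟨a, a + 1, ?_, rfl⟩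
  rw [SimpleGraph.cycleGraph_adj]
  right; abel

lemma choose_a {n : ℕ} (K : Set (Fin (n + 2))) (hK : K.Nonempty) (hC : ∃ c, c ∉ K) :
    ∃ a ∈ K, a + 1 ∉ K := by
  obtain ⟨a0, ha0⟩ := hK
  have hd : dK K hC a0 ≠ 0 := by
    intro h
    have hs := dK_spec K hC a0
    rw [h] at hs
    simp only [Nat.cast_zero, add_zero] at hs
    exact hs ha0
  obtain ⟨j1, hj1⟩ : ∃ j1, dK K hC a0 = j1 + 1 := ⟨dK K hC a0 - 1, by omega⟩
  refine ⟨a0 + (j1 : Fin (n + 2)), dK_min K hC a0 (by omega), ?_⟩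
  have hs := dK_spec K hC a0
  rw [hj1, cast_succ_add] at hs
  exact hs

lemma pushF_mem {n : ℕ} : ∀ (N : ℕ) (K : Set (Fin (n + 2))), K.Nonempty →
    ∀ (hC : ∃ c, c ∉ K), K.ncard ≤ N →
    pushF K hC ∈ flowSemigroup (SimpleGraph.cycleGraph (n + 2)).Adj := by
  intro N
  induction N using Nat.strong_induction_on with
  | _ N ih =>
    intro K hK hC hcard
    obtain ⟨a, haK, ha1⟩ := choose_a K hK hC
    rcases Set.eq_empty_or_nonempty (K \ {a}) with hKd | hKd
    · -- K = {a}
      have hKa : ∀ x ∈ K, x = a := by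
        intro x hx
        by_contra hne
        have hmem : x ∈ K \ {a} := ⟨hx, hne⟩
        rw [hKd] at hmem
        exact hmem
      have hpf : pushF K hC = collapse a (a + 1) := by
        funext x
        show x + ((dK K hC x : ℕ) : Fin (n + 2)) = if x = a then a + 1 else x
        by_cases hx : x = a
        · rw [if_pos hx]
          have hd : dK K hC x = 1 := by
            apply dK_eq
            · intro hmem
              rw [hx, Nat.cast_one] at hmem
              exact ha1 hmem
            · intro j hj
              interval_cases j
              simp only [Nat.cast_zero, add_zero]
              rw [hx]; exact haK
          rw [hd, hx, Nat.cast_one]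
        · rw [if_neg hx]
          have hd : dK K hC x = 0 := by
            apply dK_eq
            · simp only [Nat.cast_zero, add_zero]
              exact fun hmem => hx (hKa x hmem)
            · omega
          rw [hd, Nat.cast_zero, add_zero]
      rw [hpf]
      exact Subsemigroup.subset_closure (collapse_succ_mem a)
    · -- inductive case
      have hC' : ∃ c, c ∉ K \ {a} := by
        obtain ⟨c, hc⟩ := hC
        exact ⟨c, fun h => hc h.1⟩
      have hpos : 0 < K.ncard := (Set.ncard_pos (Set.toFinite K)).mpr hK
      have hKd_card : (K \ {a}).ncard = K.ncard - 1 := Set.ncard_diff_singleton_of_mem haK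
      have hlt : (K \ {a}).ncard < N := by omega
      have hIH := ih (K \ {a}).ncard hlt (K \ {a}) hKd hC' le_rfl
      have key : pushF K hC = collapse a (a + 1) * pushF (K \ {a}) hC' := by
        funext x
        show x + ((dK K hC x : ℕ) : Fin (n + 2)) =
          collapse a (a + 1) (x + ((dK (K \ {a}) hC' x : ℕ) : Fin (n + 2)))
        set d' := dK (K \ {a}) hC' x with hd'
        by_cases hy : x + ((d' : ℕ) : Fin (n + 2)) = a
        · have hd : dK K hC x = d' + 1 := by
            apply dK_eq
            · rw [cast_succ_add, hy]
              exact ha1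
            · intro j hj
              rcases Nat.lt_succ_iff_lt_or_eq.mp hj with hj' | hj'
              · exact (dK_min (K \ {a}) hC' x (hd' ▸ hj')).1
              · rw [hj', hy]; exact haK
          rw [hd]
          show _ = if x + ((d' : ℕ) : Fin (n + 2)) = a then a + 1 else _
          rw [if_pos hy, cast_succ_add, hy]
        · have hd : dK K hC x = d' := by
            apply dK_eq
            · intro hmem
              exact (dK_spec (K \ {a}) hC' x) ⟨hmem, hy⟩
            · intro j hj
              exact (dK_min (K \ {a}) hC' x (hd' ▸ hj)).1
          rw [hd]
          show _ = if x + ((d' : ℕ) : Fin (n + 2)) = a then a + 1 else _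
          rw [if_neg hy]
      rw [key]
      exact Subsemigroup.mul_mem _ (Subsemigroup.subset_closure (collapse_succ_mem a)) hIH

lemma conveyor {n : ℕ} (a : Fin (n + 2)) :
    ∃ s ∈ flowSemigroup (SimpleGraph.cycleGraph (n + 2)).Adj,
      (∀ x, x ≠ a → s x = x + 1) ∧ s a = a := by
  have main : ∀ t : ℕ, t ≤ n → ∃ s ∈ flowSemigroup (SimpleGraph.cycleGraph (n + 2)).Adj,
      ∀ j : ℕ, j < n + 2 →
        (n + 1 - t ≤ j → s (a + (j : Fin (n + 2))) = a + (j : Fin (n + 2)) + 1) ∧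
        (j < n + 1 - t → s (a + (j : Fin (n + 2))) = a + (j : Fin (n + 2))) := by
    intro t
    induction t with
    | zero =>
      intro _
      refine ⟨collapse (a + ((n + 1 : ℕ) : Fin (n + 2)))
          (a + ((n + 1 : ℕ) : Fin (n + 2)) + 1),
        Subsemigroup.subset_closure (collapse_succ_mem _), ?_⟩
      intro j hj
      constructor
      · intro hle
        have hj' : j = n + 1 := by omega
        subst hj'
        show collapse _ _ _ = _
        simp [collapse]
      · intro hlt
        show collapse _ _ _ = _
        simp only [collapse]
        rw [if_neg ?_]
        intro hcon
        have := (cast_inj_lt (n := n) hj (by omega)).mp (add_left_cancel hcon)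
        omega
    | succ t iht =>
      intro ht
      obtain ⟨s, hsmem, hs⟩ := iht (by omega)
      refine ⟨collapse (a + ((n - t : ℕ) : Fin (n + 2)))
          (a + ((n - t : ℕ) : Fin (n + 2)) + 1) * s,
        Subsemigroup.mul_mem _
          (Subsemigroup.subset_closure (collapse_succ_mem _)) hsmem, ?_⟩
      intro j hj
      constructor
      · intro hle
        rcases eq_or_lt_of_le hle with heq | hlt
        · -- j = n - t : s fixes, collapse moves
          have hfix := (hs j hj).2 (by omega)
          have hj_eq : (j : Fin (n + 2)) = ((n - t : ℕ) : Fin (n + 2)) :=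
            (cast_inj_lt (n := n) hj (by omega)).mpr (by omega)
          show collapse _ _ (s (a + (j : Fin (n + 2)))) = _
          rw [hfix, hj_eq]
          simp [collapse]
        · -- j > n - t : s moves, collapse fixes
          have hmov := (hs j hj).1 (by omega)
          show collapse _ _ (s (a + (j : Fin (n + 2)))) = _
          rw [hmov]
          simp only [collapse]
          rw [if_neg ?_]
          intro hcon
          rw [← cast_succ_add] at hcon
          have hcon' := add_left_cancel hcon
          rcases Nat.lt_or_ge (j + 1) (n + 2) with hj1 | hj1
          · have := (cast_inj_lt (n := n) hj1 (by omega)).mp hcon'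
            omega
          · have hj1' : j + 1 = n + 2 := by omega
            rw [hj1'] at hcon'
            have hz : ((n + 2 : ℕ) : Fin (n + 2)) = ((0 : ℕ) : Fin (n + 2)) := by
              rw [Fin.ext_iff, Fin.val_natCast, Fin.val_natCast]
              simp
            rw [hz] at hcon'
            have := (cast_inj_lt (n := n) (by omega) (by omega)).mp hcon'
            omega
      · intro hlt
        have hfix := (hs j hj).2 (by omega)
        show collapse _ _ (s (a + (j : Fin (n + 2)))) = _
        rw [hfix]
        simp only [collapse]
        rw [if_neg ?_]
        intro hcon
        have := (cast_inj_lt (n := n) hj (by omega)).mp (add_left_cancel hcon)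
        omega
  obtain ⟨s, hsmem, hs⟩ := main n le_rfl
  refine ⟨s, hsmem, ?_, ?_⟩
  · intro x hx
    have hj := (hs (x - a).val (x - a).isLt).1 ?_
    · rw [Fin.cast_val_eq_self] at hj
      have hxa : a + (x - a) = x := by abel
      rw [hxa] at hj
      exact hj
    · have hne : (x - a) ≠ 0 := fun h => hx (sub_eq_zero.mp h)
      have hv : (x - a).val ≠ 0 := fun h => hne (Fin.ext h)
      omega
  · have h0 := (hs 0 (by omega)).2 (by omega)
    simp only [Nat.cast_zero, add_zero] at h0
    exact h0

lemma sigma_val {n : ℕ} {K : Set (Fin (n + 2))} (hC : ∃ c, c ∉ K)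
    {S : Function.End (Fin (n + 2))} {a : Fin (n + 2)} (haK : a ∈ K)
    (hS : ∀ x, x ≠ a → S x = x + 1)
    (x : Fin (n + 2)) (hx : x ∉ K) (z : Fin (n + 2)) (t : ℕ) (ht1 : 1 ≤ t)
    (hz : z = x + (t : Fin (n + 2))) (hzK : z ∉ K)
    (hmid : ∀ j, 1 ≤ j → j < t → x + (j : Fin (n + 2)) ∈ K) :
    pushF K hC (S x) = z := by
  have hxa : x ≠ a := fun h => hx (h ▸ haK)
  show S x + ((dK K hC (S x) : ℕ) : Fin (n + 2)) = z
  rw [hS x hxa]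
  obtain ⟨t', rfl⟩ : ∃ t', t = t' + 1 := ⟨t - 1, by omega⟩
  have harr : ∀ j : ℕ, (x + 1) + (j : Fin (n + 2)) = x + ((j + 1 : ℕ) : Fin (n + 2)) := by
    intro j; rw [cast_succ_add, add_right_comm]
  have hd : dK K hC (x + 1) = t' := by
    apply dK_eq
    · rw [harr, ← hz]; exact hzK
    · intro j hj
      rw [harr]
      exact hmid (j + 1) (by omega) (by omega)
  rw [hd, harr, ← hz]

/-- `Equiv.permCongr` as a multiplicative equivalence. -/
def permIso {α β : Type*} (e : α ≃ β) : Equiv.Perm α ≃* Equiv.Perm β :=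
  MulEquiv.mk' e.permCongr fun p q => by
    ext i
    simp [Equiv.permCongr_apply, Equiv.Perm.mul_apply]

lemma permIso_apply {α β : Type*} (e : α ≃ β) (p : Equiv.Perm α) (x : β) :
    permIso e p x = e (p (e.symm x)) := rfl

lemma permIso_symm_apply {α β : Type*} (e : α ≃ β) (q : Equiv.Perm β) (x : α) :
    (permIso e).symm q x = e.symm (q (e x)) := rfl

lemma cyc_iff_of_le {m : ℕ} (f : Fin (m + 1) → ℕ)
    (hf : ∀ i j, f i ≤ f j ↔ i.val ≤ j.val) (A B C : Fin (m + 1)) :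
    cyc (f A) (f B) (f C) ↔ cyc A.val B.val C.val := by
  unfold cyc
  rw [hf A B, hf B C, hf C A]

lemma main_aux {n' m' : ℕ} (K : Set (Fin (n' + 2)))
    [Fintype {x : Fin (n' + 2) // x ∉ K}]
    (hcard : Fintype.card {x : Fin (n' + 2) // x ∉ K} = m' + 1)
    (hKne : K.Nonempty) (hCne : ∃ c, c ∉ K) :
    Nonempty (defectGroup (SimpleGraph.cycleGraph (n' + 2)).Adj K ≃*
      Multiplicative (ZMod (m' + 1))) := by
  obtain ⟨e⟩ : Nonempty ({x : Fin (n' + 2) // x ∉ K} ≃o Fin (m' + 1)) :=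
    ⟨(monoEquivOfFin _ hcard).symm⟩
  -- order facts about the enumeration
  have hle_iff : ∀ i j : Fin (m' + 1), (e.symm i).1.val ≤ (e.symm j).1.val ↔ i.val ≤ j.val := by
    intro i j
    rw [← Fin.le_def, ← Fin.le_def, Subtype.coe_le_coe]
    exact e.symm.le_iff_le
  have hmemC : ∀ i : Fin (m' + 1), (e.symm i).1 ∉ K := fun i => (e.symm i).2
  have hround : ∀ (x : Fin (n' + 2)) (hx : x ∉ K), (e.symm (e ⟨x, hx⟩)).1 = x := by
    intro x hx
    rw [OrderIso.symm_apply_apply]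
  -- the distinguished rotation
  set σC : Equiv.Perm {x : Fin (n' + 2) // x ∉ K} :=
    (permIso e.toEquiv).symm (finRotate (m' + 1)) with hσCdef
  have hσC_apply : ∀ (x : Fin (n' + 2)) (hx : x ∉ K),
      σC ⟨x, hx⟩ = e.symm (e ⟨x, hx⟩ + 1) := by
    intro x hx
    rw [hσCdef, permIso_symm_apply]
    show e.symm ((finRotate (m' + 1)) (e ⟨x, hx⟩)) = _
    rw [finRotate_succ_apply]
  -- direction 1 : the defect group is contained in the powers of σC
  have hdir1 : defectGroup (SimpleGraph.cycleGraph (n' + 2)).Adj K ≤ Subgroup.zpowers σC := by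
    unfold defectGroup
    apply (Subgroup.closure_le _).mpr
    rintro p ⟨s, hsmem, hsK, hsp⟩
    have hq : ∀ A B C : Fin (m' + 1), cyc A.val B.val C.val →
        cyc ((permIso e.toEquiv p) A).val ((permIso e.toEquiv p) B).val
          ((permIso e.toEquiv p) C).val := by
      intro A B C h
      have h1 : cyc (e.symm A).1.val (e.symm B).1.val (e.symm C).1.val :=
        (cyc_iff_of_le _ hle_iff A B C).mpr h
      have h2 := flow_cyc hsmem _ _ _ h1
      have key : ∀ i : Fin (m' + 1), s (e.symm i).1 = (e.symm ((permIso e.toEquiv p) i)).1 := by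
        intro i
        have hw := hsp (e.symm i).1 (e.symm i).2
        rw [hw]
        have hip : permIso e.toEquiv p i = e (p (e.symm i)) := rfl
        rw [hip, OrderIso.symm_apply_apply]
      rw [key A, key B, key C] at h2
      exact (cyc_iff_of_le _ hle_iff _ _ _).mp h2
    have hrot := perm_cyc_rot _ hq
    rw [SetLike.mem_coe, Subgroup.mem_zpowers_iff]
    rw [Subgroup.mem_zpowers_iff] at hrot
    obtain ⟨z, hz⟩ := hrot
    refine ⟨z, ?_⟩
    calc σC ^ z = (permIso e.toEquiv).symm (finRotate (m' + 1) ^ z) := by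
          rw [hσCdef, map_zpow]
      _ = (permIso e.toEquiv).symm (permIso e.toEquiv p) := by rw [hz]
      _ = p := MulEquiv.symm_apply_apply _ _
  -- direction 2 : σC is a generator of the defect group
  obtain ⟨a, haK⟩ := hKne
  obtain ⟨S, hSmem, hSne, hSa⟩ := conveyor a
  have hsigmem : pushF K hCne * S ∈ flowSemigroup (SimpleGraph.cycleGraph (n' + 2)).Adj :=
    Subsemigroup.mul_mem _ (pushF_mem K.ncard K ⟨a, haK⟩ hCne le_rfl) hSmem
  have hgen : σC ∈ {p : Equiv.Perm {x : Fin (n' + 2) // x ∉ K} |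
      ∃ s ∈ flowSemigroup (SimpleGraph.cycleGraph (n' + 2)).Adj,
        (∀ x ∈ K, s x ∉ K) ∧ ∀ (x : Fin (n' + 2)) (h : x ∉ K), s x = ↑(p ⟨x, h⟩)} := by
    refine ⟨pushF K hCne * S, hsigmem, fun x _ => pushF_not_mem K hCne (S x), ?_⟩
    intro x hx
    show pushF K hCne (S x) = ((σC ⟨x, hx⟩ : {x : Fin (n' + 2) // x ∉ K}) : Fin (n' + 2))
    rw [hσC_apply x hx]
    have hxval : (e.symm (e ⟨x, hx⟩)).1 = x := hround x hx
    set i : Fin (m' + 1) := e ⟨x, hx⟩ with hidef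
    set zv : ℕ := (e.symm (i + 1)).1.val with hzvdef
    have hzlt : zv < n' + 2 := (e.symm (i + 1)).1.isLt
    have hxlt : x.val < n' + 2 := x.isLt
    rcases fin_add_one_val i with ⟨hv1, hv2⟩ | ⟨hv1, hv2⟩
    · -- no wrap around
      have hstrict : x.val < zv := by
        have := (hle_iff (i + 1) i).not
        push_neg at this
        have h2 : ¬ ((i + 1).val ≤ i.val) := by omega
        have h3 : ¬ ((e.symm (i + 1)).1.val ≤ (e.symm i).1.val) := fun hc =>
          h2 ((hle_iff (i + 1) i).mp hc)
        rw [hxval] at h3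
        omega
      apply sigma_val hCne haK hSne x hx _ (zv - x.val) (by omega) ?_ (hmemC (i + 1)) ?_
      · apply Fin.ext
        rw [fin_val_add_cast]
        have harith : x.val + (zv - x.val) = zv := by omega
        rw [harith, Nat.mod_eq_of_lt hzlt]
      · intro j hj1 hjt
        by_contra hnot
        have hyval : (x + (j : Fin (n' + 2))).val = x.val + j := by
          rw [fin_val_add_cast, Nat.mod_eq_of_lt (by omega)]
        have hrnd := hround _ hnot
        set ℓ : Fin (m' + 1) := e ⟨x + (j : Fin (n' + 2)), hnot⟩ with hldef
        have hlv : (e.symm ℓ).1.val = x.val + j := by rw [hrnd, hyval]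
        -- x.val < (e.symm ℓ).1.val < zv
        have hA : ¬ ((e.symm ℓ).1.val ≤ (e.symm i).1.val) := by
          rw [hlv, hxval]; omega
        have hB : ¬ ((e.symm (i + 1)).1.val ≤ (e.symm ℓ).1.val) := by
          rw [hlv, ← hzvdef]; omega
        have hA' : ¬ (ℓ.val ≤ i.val) := fun hc => hA ((hle_iff ℓ i).mpr hc)
        have hB' : ¬ ((i + 1).val ≤ ℓ.val) := fun hc => hB ((hle_iff (i + 1) ℓ).mpr hc)
        omega
    · -- wrap around : i is the last index
      have hwk : zv ≤ x.val := by
        have := (hle_iff (i + 1) i).mpr (by omega)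
        rw [hxval] at this
        omega
      apply sigma_val hCne haK hSne x hx _ (n' + 2 + zv - x.val) (by omega) ?_ (hmemC (i + 1)) ?_
      · apply Fin.ext
        rw [fin_val_add_cast]
        have harith : x.val + (n' + 2 + zv - x.val) = (n' + 2) + zv := by omega
        rw [harith, Nat.add_mod_left, Nat.mod_eq_of_lt hzlt]
      · intro j hj1 hjt
        by_contra hnot
        have hrnd := hround _ hnot
        set ℓ : Fin (m' + 1) := e ⟨x + (j : Fin (n' + 2)), hnot⟩ with hldef
        have hlmax : (e.symm ℓ).1.val ≤ x.val := by
          have := (hle_iff ℓ i).mpr (by omega)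
          rw [hxval] at this
          exact this
        have hlmin : zv ≤ (e.symm ℓ).1.val := (hle_iff (i + 1) ℓ).mpr (by omega)
        rcases Nat.lt_or_ge (x.val + j) (n' + 2) with hcase | hcase
        · have hyval : (x + (j : Fin (n' + 2))).val = x.val + j := by
            rw [fin_val_add_cast, Nat.mod_eq_of_lt hcase]
          rw [hrnd, hyval] at hlmax
          omega
        · have hyval : (x + (j : Fin (n' + 2))).val = x.val + j - (n' + 2) := by
            rw [fin_val_add_cast, mod_eq_sub' hcase (by omega)]
          rw [hrnd, hyval] at hlmin
          omega
  have hdir2 : Subgroup.zpowers σC ≤ defectGroup (SimpleGraph.cycleGraph (n' + 2)).Adj K :=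
    Subgroup.zpowers_le.mpr (Subgroup.subset_closure hgen)
  have heq : defectGroup (SimpleGraph.cycleGraph (n' + 2)).Adj K = Subgroup.zpowers σC :=
    le_antisymm hdir1 hdir2
  -- the group of powers of σC is cyclic of order m' + 1
  have hcyc : IsCyclic ↥(Subgroup.zpowers σC) := by
    refine ⟨⟨σC, Subgroup.mem_zpowers σC⟩, ?_⟩
    rintro ⟨x, hx⟩
    rw [Subgroup.mem_zpowers_iff] at hx
    obtain ⟨z, hz⟩ := hx
    exact ⟨z, Subtype.ext (by rw [SubgroupClass.coe_zpow]; exact hz)⟩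
  have hordrot : orderOf (finRotate (m' + 1)) = m' + 1 := by
    rcases m' with _ | m''
    · rw [finRotate_one]
      exact orderOf_one
    · rw [(isCycle_finRotate (n := m'')).orderOf, support_finRotate, Finset.card_univ,
        Fintype.card_fin]
  have hord : orderOf σC = m' + 1 := by
    have h1 : orderOf (permIso e.toEquiv σC) = orderOf σC :=
      orderOf_injective (permIso e.toEquiv).toMonoidHom (permIso e.toEquiv).injective σC
    have h2 : permIso e.toEquiv σC = finRotate (m' + 1) := by
      rw [hσCdef]
      exact MulEquiv.apply_symm_apply _ _
    rw [← h1, h2, hordrot]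
  have hcardz : Nat.card ↥(Subgroup.zpowers σC) = m' + 1 := by
    rw [Nat.card_zpowers, hord]
  refine ⟨?_⟩
  rw [← hcardz]
  exact (MulEquiv.subgroupCongr heq).trans (zmodCyclicMulEquiv hcyc).symm

/-- The defect `k` group of the cycle graph on `n` vertices is cyclic of order `n - k`. -/
theorem stmt3 (n k : ℕ) (hk1 : 1 ≤ k) (hkn : k ≤ n - 1)
    (K : Set (Fin n)) (hK : K.ncard = k) :
    Nonempty (defectGroup (SimpleGraph.cycleGraph n).Adj K ≃* Multiplicative (ZMod (n - k))) := by
  have hn2 : 2 ≤ n := by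
    rcases n with _ | _ | n <;> omega
  obtain ⟨n', rfl⟩ : ∃ n', n = n' + 2 := ⟨n - 2, by omega⟩
  haveI : Fintype {x : Fin (n' + 2) // x ∉ K} := Fintype.ofFinite _
  have hkn' : k ≤ n' + 1 := by omega
  obtain ⟨m', hm'⟩ : ∃ m', n' + 2 - k = m' + 1 := ⟨n' + 1 - k, by omega⟩
  have hKne : K.Nonempty := (Set.ncard_pos (Set.toFinite K)).mp (by omega)
  have hcompl : K.ncard + Kᶜ.ncard = n' + 2 := by
    rw [Set.ncard_add_ncard_compl]
    simp [Nat.card_eq_fintype_card]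
  have hCcard : Kᶜ.ncard = m' + 1 := by omega
  have hCne : ∃ c, c ∉ K := by
    have : Kᶜ.Nonempty := (Set.ncard_pos (Set.toFinite Kᶜ)).mp (by omega)
    obtain ⟨c, hc⟩ := this
    exact ⟨c, hc⟩
  have hcard : Fintype.card {x : Fin (n' + 2) // x ∉ K} = m' + 1 := by
    rw [← Nat.card_eq_fintype_card]
    have h0 : Nat.card {x : Fin (n' + 2) // x ∉ K} = Nat.card ↥(Kᶜ) :=
      Nat.card_congr (Equiv.subtypeEquivRight fun x => (Set.mem_compl_iff K x).symm)
    rw [h0, Nat.card_coe_set_eq, hCcard]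
  rw [hm']
  exact main_aux K hcard hKne hCne
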